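/- The property of having a right locally bounded approximate identity does not depend on the choice of the directed generating family of seminorms: if {‖·‖_λ : λ ∈ Λ} and {|·|_μ : μ ∈ M} are two directed families of continuous seminorms on a locally convex algebra A each generating its topology, then A has a right locally bounded a.i. with respect to the first family if and only if it has one with respect to the second. -/
import Mathlib


open Filter

/-- `A` has a right approximate identity: a net `(e_i)` with `a * e_i → a` for all `a`. -/
def HasRightAI (A : Type*) [NonUnitalRing A] [TopologicalSpace A] : Prop :=
  ∃ (ι : Type) (pr : Preorder ι),
    (∀ x y : ι, ∃ z, pr.le x z ∧ pr.le y z) ∧ Nonempty ι ∧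
    ∃ e : ι → A, ∀ a : A, Tendsto (fun i => a * e i) (@Filter.atTop ι pr) (nhds a)

/-- `A` has a right bounded approximate identity: a bounded net `(e_i)` with
`a * e_i → a` for all `a`. -/
def HasRightBAI (A : Type*) [NonUnitalRing A] [Module ℂ A] [TopologicalSpace A] : Prop :=
  ∃ (ι : Type) (pr : Preorder ι),
    (∀ x y : ι, ∃ z, pr.le x z ∧ pr.le y z) ∧ Nonempty ι ∧
    ∃ e : ι → A, Bornology.IsVonNBounded ℂ (Set.range e) ∧
      ∀ a : A, Tendsto (fun i => a * e i) (@Filter.atTop ι pr) (nhds a)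

/-- `A` has a right locally bounded approximate identity with respect to the seminorm
family `q`. -/
def HasRightLBAI {A Λ : Type*} [NonUnitalRing A] [Module ℂ A]
    (q : SeminormFamily ℂ A Λ) : Prop :=
  ∃ C : Λ → ℝ, (∀ lam, 0 < C lam) ∧
    ∀ (F : Finset A) (lam : Λ) (ε : ℝ), 0 < ε →
      ∃ b : A, (∀ a ∈ F, q lam (a - a * b) < ε) ∧ q lam b ≤ C lam


/-- One direction: transfer a right locally bounded a.i. along a domination of families. -/
theorem hasRightLBAI_of_le {A Λ M : Type*} [NonUnitalRing A] [Module ℂ A] [TopologicalSpace A]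
    [Nonempty Λ] [Nonempty M]
    (q : SeminormFamily ℂ A Λ) (hq : WithSeminorms q) (hqdir : Directed (· ≤ ·) q)
    (q' : SeminormFamily ℂ A M) (hq' : WithSeminorms q')
    (h : HasRightLBAI q) : HasRightLBAI q' := by
  obtain ⟨C, hCpos, hC⟩ := h
  have key : ∀ μ : M, ∃ (lam : Λ) (r : ℝ), 0 < r ∧ ∀ x : A, q' μ x ≤ r * q lam x := by
    intro μ
    have hcont : Continuous (q' μ) := hq'.continuous_seminorm μ
    obtain ⟨s, c, hc0, hle⟩ := Seminorm.bound_of_continuous hq (q' μ) hcont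
    obtain ⟨lam, hlam⟩ := hqdir.finset_le s
    refine ⟨lam, (c : ℝ), by positivity, fun x => ?_⟩
    calc q' μ x ≤ (c • s.sup q) x := hle x
      _ = (c : ℝ) * (s.sup q) x := rfl
      _ ≤ (c : ℝ) * q lam x := by
          gcongr
          exact (Finset.sup_le hlam : s.sup q ≤ q lam) x
  choose lam r hr hbound using key
  refine ⟨fun μ => r μ * C (lam μ), fun μ => mul_pos (hr μ) (hCpos (lam μ)), ?_⟩
  intro F μ ε hε
  obtain ⟨b, hb1, hb2⟩ := hC F (lam μ) (ε / r μ) (div_pos hε (hr μ))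
  refine ⟨b, fun a ha => ?_, ?_⟩
  · calc q' μ (a - a * b) ≤ r μ * q (lam μ) (a - a * b) := hbound μ _
      _ < r μ * (ε / r μ) := by gcongr; exacts [hr μ, hb1 a ha]
      _ = ε := by rw [mul_comm, div_mul_cancel₀ _ (hr μ).ne']
  · calc q' μ b ≤ r μ * q (lam μ) b := hbound μ b
      _ ≤ r μ * C (lam μ) := by gcongr; exact (hr μ).le

/-- Having a right locally bounded approximate identity does not depend on the choice of
the directed generating family of seminorms. -/
theorem stmt6 {A Λ M : Type*} [NonUnitalRing A] [Module ℂ A] [TopologicalSpace A]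
    [Nonempty Λ] [Nonempty M]
    (q : SeminormFamily ℂ A Λ) (hq : WithSeminorms q) (hqdir : Directed (· ≤ ·) q)
    (q' : SeminormFamily ℂ A M) (hq' : WithSeminorms q') (hq'dir : Directed (· ≤ ·) q')
    (hmul : Continuous fun ab : A × A => ab.1 * ab.2) :
    HasRightLBAI q ↔ HasRightLBAI q' :=
  ⟨hasRightLBAI_of_le q hq hqdir q' hq', hasRightLBAI_of_le q' hq' hq'dir q hq⟩
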